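/- For any regular cardinal κ and any cardinal μ < κ, the cardinal (2^{<κ})^+ satisfies the partition relation (2^{<κ})^+ → (κ+1)^2_μ: for every coloring f of pairs from (2^{<κ})^+ into μ colors there is a set of order type κ+1 homogeneous for f. -/

import Mathlib

open Cardinal Ordinal

/-- The order type of a set of ordinals (an `Ordinal.{1}` for universe reasons). -/
noncomputable def otype (s : Set Ordinal.{0}) : Ordinal.{1} :=
  Ordinal.type (Subrel ((· < ·) : Ordinal → Ordinal → Prop) (· ∈ s))

/-- `OT s o` means the set of ordinals `s` has order type `o`. -/
def OT (s : Set Ordinal.{0}) (o : Ordinal.{0}) : Prop := otype s = Ordinal.lift.{1,0} o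

/-- `2^{<κ} = sup { 2^μ : μ < κ }`. -/
noncomputable def twoLT (κ : Cardinal.{0}) : Cardinal.{0} := ⨆ μ : Set.Iio κ, 2 ^ (μ : Cardinal)

/-- `X` is `i`-homogeneous for the pair coloring `f`. -/
def Homog {α : Type*} (f : Ordinal → Ordinal → α) (X : Set Ordinal) (i : α) : Prop :=
  ∀ a ∈ X, ∀ b ∈ X, a < b → f a b = i

section ERAux

lemma otype_Iio (o : Ordinal.{0}) : otype (Set.Iio o) = Ordinal.lift.{1,0} o :=
  (type_subrel _ o).trans (typein_ordinal o)

lemma otype_le_of_subset {S T : Set Ordinal.{0}} (h : S ⊆ T) : otype S ≤ otype T := by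
  refine RelEmbedding.ordinal_type_le
    (⟨⟨fun a => ⟨a.1, h a.2⟩, ?_⟩, ?_⟩ :
      Subrel ((· < ·) : Ordinal → Ordinal → Prop) (· ∈ S) ↪r
      Subrel ((· < ·) : Ordinal → Ordinal → Prop) (· ∈ T))
  · intro a b hab
    exact Subtype.ext (show (a : Ordinal) = b from congrArg (fun z : ↥T => (z : Ordinal)) hab)
  · intro a b
    exact Iff.rfl

lemma otype_card (S : Set Ordinal.{0}) : (otype S).card = #S :=
  card_type _

lemma otype_image {g : Ordinal.{0} → Ordinal.{0}} {S : Set Ordinal.{0}}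
    (hg : ∀ a ∈ S, ∀ b ∈ S, a < b → g a < g b) : otype (g '' S) = otype S := by
  have hinj : ∀ a ∈ S, ∀ b ∈ S, g a = g b → a = b := by
    intro a ha b hb hab
    rcases lt_trichotomy a b with h | h | h
    · exact absurd (hg a ha b hb h) (by simp [hab])
    · exact h
    · exact absurd (hg b hb a ha h) (by simp [hab])
  symm
  refine RelIso.ordinal_type_eq
    ⟨Equiv.ofBijective (fun a : S => (⟨g a, Set.mem_image_of_mem _ a.2⟩ : g '' S)) ⟨?_, ?_⟩, ?_⟩
  · rintro ⟨a, ha⟩ ⟨b, hb⟩ h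
    exact Subtype.ext (hinj a ha b hb (by simpa using h))
  · rintro ⟨-, a, ha, rfl⟩
    exact ⟨⟨a, ha⟩, rfl⟩
  · rintro ⟨a, ha⟩ ⟨b, hb⟩
    constructor
    · intro h
      rcases lt_trichotomy a b with h' | h' | h'
      · exact h'
      · exact absurd (by simp [h'] : g a = g b) (ne_of_lt h)
      · exact absurd (hg b hb a ha h') (asymm h)
    · exact hg a ha b hb

lemma otype_insert_top {S : Set Ordinal.{0}} {x : Ordinal.{0}} (hx : ∀ a ∈ S, a < x) :
    otype (insert x S) = otype S + 1 := by
  have hone : Ordinal.type (@emptyRelation PUnit.{2}) = 1 := by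
    rw [Ordinal.type_eq_one_iff_unique]
    exact ⟨inferInstance⟩
  rw [otype, otype, ← hone, ← type_sum_lex]
  have hxS : x ∉ S := fun h => lt_irrefl x (hx x h)
  letI F : (↥S ⊕ PUnit.{2}) → ↥(insert x S) := fun a =>
    Sum.rec (fun a : S => (⟨a.1, Set.mem_insert_of_mem x a.2⟩ : ↥(insert x S)))
      (fun _ => (⟨x, Set.mem_insert x S⟩ : ↥(insert x S))) a
  have hbij : Function.Bijective F := by
    constructor
    · rintro (⟨a, ha⟩ | ⟨⟩) (⟨b, hb⟩ | ⟨⟩) h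
      · exact congrArg Sum.inl (Subtype.ext (show (a : Ordinal) = b from congrArg (fun z : ↥(insert x S) => (z : Ordinal)) h))
      · exact absurd (show (a : Ordinal) = x from congrArg (fun z : ↥(insert x S) => (z : Ordinal)) h) (ne_of_lt (hx a ha))
      · exact absurd (show (b : Ordinal) = x from (congrArg (fun z : ↥(insert x S) => (z : Ordinal)) h).symm) (ne_of_lt (hx b hb))
      · rfl
    · rintro ⟨b, hb⟩
      rcases hb with rfl | hb
      · exact ⟨Sum.inr PUnit.unit, rfl⟩
      · exact ⟨Sum.inl ⟨b, hb⟩, rfl⟩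
  refine (RelIso.ordinal_type_eq ⟨Equiv.ofBijective F hbij, @fun a b => ?_⟩).symm
  rcases a with ⟨a, ha⟩ | ⟨⟩ <;> rcases b with ⟨b, hb⟩ | ⟨⟩
  · rw [Sum.lex_inl_inl]
    exact Iff.rfl
  · refine ⟨fun _ => Sum.Lex.sep _ _, fun _ => ?_⟩
    exact hx a ha
  · exact ⟨fun h => absurd (show (x : Ordinal) < b from h) (asymm (hx b hb)), fun h => by cases h⟩
  · exact ⟨fun h => absurd (show (x : Ordinal) < x from h) (lt_irrefl x), fun h => by cases h; rename_i h'; cases h'⟩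

noncomputable def seqA (f : Ordinal.{0} → Ordinal.{0} → Ordinal.{0}) (x : Ordinal.{0}) :
    Ordinal.{0} → Ordinal.{0} :=
  Ordinal.lt_wf.fix fun ξ a =>
    sInf {b | ∀ η, ∀ h : η < ξ, a η h < b ∧ f (a η h) b = f (a η h) x}

lemma seqA_def (f : Ordinal.{0} → Ordinal.{0} → Ordinal.{0}) (x ξ : Ordinal.{0}) :
    seqA f x ξ =
      sInf {b | ∀ η, η < ξ → seqA f x η < b ∧ f (seqA f x η) b = f (seqA f x η) x} :=
  Ordinal.lt_wf.fix_eq _ ξ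

lemma seqA_le {f : Ordinal.{0} → Ordinal.{0} → Ordinal.{0}} {x ξ : Ordinal.{0}}
    (h : ∀ η < ξ, seqA f x η < x) : seqA f x ξ ≤ x := by
  rw [seqA_def]
  exact csInf_le' (fun η hη => ⟨h η hη, rfl⟩)

lemma seqA_spec {f : Ordinal.{0} → Ordinal.{0} → Ordinal.{0}} {x ξ : Ordinal.{0}}
    (h : ∀ η < ξ, seqA f x η < x) :
    ∀ η < ξ, seqA f x η < seqA f x ξ ∧ f (seqA f x η) (seqA f x ξ) = f (seqA f x η) x := by
  have hmem : seqA f x ξ ∈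
      {b | ∀ η, η < ξ → seqA f x η < b ∧ f (seqA f x η) b = f (seqA f x η) x} := by
    rw [seqA_def]
    exact csInf_mem ⟨x, fun η hη => ⟨h η hη, rfl⟩⟩
  exact hmem

lemma seqA_congr {f : Ordinal.{0} → Ordinal.{0} → Ordinal.{0}} {x y ξ : Ordinal.{0}}
    (h : ∀ η < ξ, f (seqA f x η) x = f (seqA f y η) y) :
    ∀ η ≤ ξ, seqA f x η = seqA f y η := by
  intro η
  induction η using Ordinal.induction with
  | h η IH =>
    intro hη
    rw [seqA_def, seqA_def]
    congr 1
    ext b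
    constructor
    · intro hb γ hγ
      have e := IH γ hγ (hγ.le.trans hη)
      have ec := h γ (lt_of_lt_of_le hγ hη)
      rw [← e] at ec ⊢
      rw [← ec]
      exact hb γ hγ
    · intro hb γ hγ
      have e := IH γ hγ (hγ.le.trans hη)
      have ec := h γ (lt_of_lt_of_le hγ hη)
      rw [e] at ec ⊢
      rw [ec]
      exact hb γ hγ

lemma seqA_inj {f : Ordinal.{0} → Ordinal.{0} → Ordinal.{0}} {x y ξ : Ordinal.{0}}
    (hx : seqA f x ξ = x) (hy : seqA f y ξ = y)
    (h : ∀ η < ξ, f (seqA f x η) x = f (seqA f y η) y) : x = y := by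
  rw [← hx, ← hy]
  exact seqA_congr h ξ le_rfl

lemma twoLT_bddAbove (κ : Cardinal.{0}) :
    BddAbove (Set.range fun ν : Set.Iio κ => ((2:Cardinal) ^ (ν : Cardinal))) := by
  refine ⟨(2:Cardinal) ^ κ, ?_⟩
  rintro _ ⟨ν, rfl⟩
  exact power_le_power_left two_ne_zero ν.2.le

lemma le_twoLT {κ ν : Cardinal.{0}} (h : ν < κ) : 2 ^ ν ≤ twoLT κ :=
  le_ciSup (twoLT_bddAbove κ) ⟨ν, h⟩

lemma self_le_twoLT (κ : Cardinal.{0}) : κ ≤ twoLT κ := by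
  by_contra h
  push_neg at h
  exact absurd (le_twoLT h) (not_le_of_gt (cantor _))

lemma power_le_twoLT {κ μ c : Cardinal.{0}} (hκ : ℵ₀ ≤ κ) (hμ : μ < κ) (hc : c < κ) :
    μ ^ c ≤ twoLT κ := by
  calc μ ^ c ≤ ((2:Cardinal) ^ μ) ^ c := power_le_power_right (cantor μ).le
  _ = (2:Cardinal) ^ (μ * c) := (power_mul ..).symm
  _ ≤ twoLT κ := le_twoLT (mul_lt_of_lt hκ hμ hc)


end ERAux

/-- **Erdős–Rado**: if `κ` is regular and `μ < κ` then `(2^{<κ})⁺ → (κ+1)²_μ`. -/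
theorem erdosRado (κ μ : Cardinal.{0}) (hκ : κ.IsRegular) (hμ : μ < κ)
    (f : Ordinal → Ordinal → Ordinal) (hf : ∀ a b, f a b < μ.ord) :
    ∃ X ⊆ Set.Iio (Order.succ (twoLT κ)).ord,
      OT X (κ.ord + 1) ∧ ∃ i, Homog f X i := by
  have hκ0 : ℵ₀ ≤ κ := hκ.aleph0_le
  have hklam : κ ≤ twoLT κ := self_le_twoLT κ
  have hlam0 : ℵ₀ ≤ twoLT κ := hκ0.trans hklam
  set lam := twoLT κ with hlam
  set θ := (Order.succ lam).ord with hθdef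
  set κo := κ.ord with hκodef
  have hmkκo : #(Set.Iio κo) = Cardinal.lift.{1} κ := by
    rw [Ordinal.mk_Iio_ordinal, hκodef, card_ord]
  -- Step 1: there is a good `x < θ`
  obtain ⟨x, hxθ, hgood⟩ : ∃ x, x < θ ∧ ∀ ξ < κo, seqA f x ξ < x := by
    by_contra hbad
    push_neg at hbad
    set Bad : Ordinal.{0} → Set Ordinal.{0} := fun ξ =>
      {x | (∀ η < ξ, seqA f x η < x) ∧ seqA f x ξ = x} with hBad
    have hsub : Set.Iio θ ⊆ ⋃ ξ : Set.Iio κo, Bad ξ.1 := by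
      intro x hx
      obtain ⟨ξ0, hξ0κ, hξ0ge⟩ := hbad x hx
      have hne : {ξ | ξ < κo ∧ x ≤ seqA f x ξ}.Nonempty := ⟨ξ0, hξ0κ, hξ0ge⟩
      set ξx := sInf {ξ | ξ < κo ∧ x ≤ seqA f x ξ} with hξx
      obtain ⟨hξκ, hξge⟩ := csInf_mem hne
      have hlt : ∀ η < ξx, seqA f x η < x := by
        intro η hη
        by_contra hc
        exact absurd hη (not_lt_of_ge (csInf_le' ⟨hη.trans hξκ, le_of_not_gt hc⟩))
      exact Set.mem_iUnion.mpr ⟨⟨ξx, hξκ⟩, hlt, le_antisymm (seqA_le hlt) hξge⟩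
    have hcount : ∀ ξ : Set.Iio κo, #(Bad ξ.1) ≤ Cardinal.lift.{1} lam := by
      intro ξ
      have hinj : Function.Injective (fun x : Bad ξ.1 =>
          (fun η : Set.Iio ξ.1 => (⟨f (seqA f x.1 η.1) x.1, hf _ _⟩ : Set.Iio μ.ord))) := by
        intro x y h
        refine Subtype.ext (seqA_inj x.2.2 y.2.2 fun η hη => ?_)
        have := congrFun h ⟨η, hη⟩
        exact congrArg Subtype.val this
      calc #(Bad ξ.1) ≤ #(Set.Iio ξ.1 → Set.Iio μ.ord) := mk_le_of_injective hinj
        _ = #(Set.Iio μ.ord) ^ #(Set.Iio ξ.1) := (power_def _ _).symm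
        _ = Cardinal.lift.{1} μ ^ Cardinal.lift.{1} ξ.1.card := by
            rw [Ordinal.mk_Iio_ordinal, Ordinal.mk_Iio_ordinal, card_ord]
        _ = Cardinal.lift.{1} (μ ^ ξ.1.card) := (lift_power _ _).symm
        _ ≤ Cardinal.lift.{1} lam :=
            lift_le.mpr (power_le_twoLT hκ0 hμ (Cardinal.lt_ord.mp ξ.2))
    have hbig : #(Set.Iio θ) ≤ Cardinal.lift.{1} lam := by
      calc #(Set.Iio θ) ≤ #(⋃ ξ : Set.Iio κo, Bad ξ.1) := mk_le_mk_of_subset hsub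
        _ ≤ Cardinal.sum (fun ξ : Set.Iio κo => #(Bad ξ.1)) := mk_iUnion_le_sum_mk
        _ ≤ Cardinal.sum (fun _ : Set.Iio κo => Cardinal.lift.{1} lam) :=
            Cardinal.sum_le_sum _ _ hcount
        _ = #(Set.Iio κo) * Cardinal.lift.{1} lam := sum_const' _ _
        _ = Cardinal.lift.{1} (κ * lam) := by rw [hmkκo, Cardinal.lift_mul]
        _ = Cardinal.lift.{1} lam := by
            rw [mul_eq_max hκ0 hlam0, max_eq_right hklam]
    rw [hθdef, Ordinal.mk_Iio_ordinal, card_ord, Cardinal.lift_succ] at hbig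
    exact absurd hbig (not_le_of_gt (Order.lt_succ _))
  -- Step 2: pigeonhole
  set g : Set.Iio κo → Set.Iio μ.ord := fun ξ => ⟨f (seqA f x ξ.1) x, hf _ _⟩ with hg
  have h₁ : ℵ₀ ≤ #(Set.Iio κo) := by rw [hmkκo]; exact aleph0_le_lift.mpr hκ0
  have h₂ : #(Set.Iio μ.ord) < (#(Set.Iio κo)).ord.cof := by
    rw [hmkκo, Ordinal.mk_Iio_ordinal, card_ord, ← lift_ord, ← lift_cof,
      le_antisymm (cof_ord_le κ) hκ.2]
    exact lift_lt.mpr hμ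
  obtain ⟨i, hi⟩ := Cardinal.infinite_pigeonhole g h₁ h₂
  set T : Set Ordinal.{0} := Subtype.val '' (g ⁻¹' {i}) with hT
  have hTsub : T ⊆ Set.Iio κo := by rintro _ ⟨ξ, -, rfl⟩; exact ξ.2
  have hTcol : ∀ ξ ∈ T, f (seqA f x ξ) x = i.1 := by
    rintro _ ⟨ξ, hξ, rfl⟩
    exact congrArg Subtype.val (Set.mem_singleton_iff.mp hξ)
  have hTcard : #T = Cardinal.lift.{1} κ := by
    rw [hT, mk_image_eq Subtype.val_injective, hi, hmkκo]
  have hotT : otype T = Ordinal.lift.{1} κo := by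
    refine le_antisymm ((otype_le_of_subset hTsub).trans_eq (otype_Iio κo)) ?_
    rw [hκodef, lift_ord]
    rw [Cardinal.ord_le, otype_card, hTcard]
  have hmono : ∀ a ∈ T, ∀ b ∈ T, a < b → seqA f x a < seqA f x b := by
    intro a _ b hb hab
    exact (seqA_spec (fun η hη => hgood η (hη.trans (hTsub hb))) a hab).1
  have hcol2 : ∀ a ∈ T, ∀ b ∈ T, a < b → f (seqA f x a) (seqA f x b) = f (seqA f x a) x := by
    intro a _ b hb hab
    exact (seqA_spec (fun η hη => hgood η (hη.trans (hTsub hb))) a hab).2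
  set X : Set Ordinal.{0} := insert x (seqA f x '' T) with hX
  have himglt : ∀ a ∈ seqA f x '' T, a < x := by
    rintro _ ⟨ξ, hξ, rfl⟩
    exact hgood ξ (hTsub hξ)
  refine ⟨X, ?_, ?_, i.1, ?_⟩
  · intro a ha
    rcases ha with rfl | ha
    · exact hxθ
    · exact (himglt a ha).trans hxθ
  · show otype X = _
    rw [hX, otype_insert_top himglt, otype_image hmono, hotT, Ordinal.lift_add,
      Ordinal.lift_one]
  · intro a ha b hb hab
    rcases ha with rfl | ⟨ξa, hξa, rfl⟩
    · rcases hb with rfl | hb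
      · exact absurd hab (lt_irrefl _)
      · exact absurd (hab.trans (himglt b hb)) (lt_irrefl _)
    · rcases hb with rfl | ⟨ξb, hξb, rfl⟩
      · exact hTcol ξa hξa
      · have hltξ : ξa < ξb := by
          rcases lt_trichotomy ξa ξb with h | h | h
          · exact h
          · exact absurd (h ▸ hab) (lt_irrefl _)
          · exact absurd hab (asymm (hmono _ hξb _ hξa h))
        rw [hcol2 ξa hξa ξb hξb hltξ]
        exact hTcol ξa hξa
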